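/- Let Alg be a consistent scenario decision algorithm that is permutation invariant and stable with ρ(Alg) ≤ d. Let N ≥ d and m ≥ d be integers, let I ⊆ {1,...,N} with |I| = d, and let (j_1,...,j_m) ∈ {1,...,N}^m be such that there exists I' = {i_1,...,i_d} ⊆ {1,...,m} with I = {j_{i_1},...,j_{i_d}}. Then for every tuple z = (z_1,...,z_N) ∈ Z^N: if I is a compression set for z, then I' is a compression set for the tuple z' = (z_{j_1},...,z_{j_m}). -/

import Mathlib

open MeasureTheory

section Scenario

variable {X Z : Type*}

/-- The subtuple of the tuple `z` indexed by the elements of `I`,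
taken in increasing order of the indices. -/
def subtuple {N : ℕ} (z : Fin N → Z) (I : Finset (Fin N)) : List Z :=
  (I.sort (· ≤ ·)).map z

/-- `I` is a compression set for the tuple `z` with respect to the algorithm `Alg`:
`Alg` applied to the subtuple indexed by `I` returns the same decision as `Alg`
applied to the whole tuple. -/
def IsCompression (Alg : List Z → X) {N : ℕ} (z : Fin N → Z) (I : Finset (Fin N)) : Prop :=
  Alg (subtuple z I) = Alg (List.ofFn z)

/-- `Alg` is permutation invariant. -/
def PermInvariant (Alg : List Z → X) : Prop :=
  ∀ l l' : List Z, l.Perm l' → Alg l = Alg l'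

/-- `Alg` is stable: if the decision made from a tuple satisfies an extra constraint,
then appending that constraint does not change the decision. -/
def Stable (mem : X → Z → Prop) (Alg : List Z → X) : Prop :=
  ∀ (l : List Z) (w : Z), mem (Alg l) w → Alg (l ++ [w]) = Alg l

/-- `Alg` is consistent: the decision satisfies all sampled constraints. -/
def Consistent (mem : X → Z → Prop) (Alg : List Z → X) : Prop :=
  ∀ (l : List Z), ∀ w ∈ l, mem (Alg l) w

/-- The compression size of `Alg` is at most `d`: every finite tuple admits a
compression set of cardinality at most `d`. -/
def CompressionSizeLE (Alg : List Z → X) (d : ℕ) : Prop :=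
  ∀ (N : ℕ) (z : Fin N → Z), ∃ I : Finset (Fin N), I.card ≤ d ∧ IsCompression Alg z I

/-- The unique-compression assumption for `d`: every tuple of length at least `d`
has exactly one compression set of cardinality `d`. -/
def UniqueCompression (Alg : List Z → X) (d : ℕ) : Prop :=
  ∀ (N : ℕ), d ≤ N → ∀ z : Fin N → Z,
    ∃! I : Finset (Fin N), I.card = d ∧ IsCompression Alg z I

/-- The risk (violation probability) of the decision `x` w.r.t. `P`. -/
noncomputable def risk [MeasurableSpace Z] (mem : X → Z → Prop)
    (P : Measure Z) (x : X) : ℝ :=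
  (P {w | ¬ mem x w}).toReal

/-- `σ` is a selection algorithm with discarding size `r`: it returns a subtuple
(subsequence) of its input that discards at most `r` constraints. -/
def IsSelection (σ : List Z → List Z) (r : ℕ) : Prop :=
  ∀ l : List Z, (σ l).Sublist l ∧ l.length - r ≤ (σ l).length

end Scenario


theorem append_eq_of_mem {X Z : Type*} {mem : X → Z → Prop} {Alg : List Z → X}
    (hstab : Stable mem Alg) (l₀ : List Z) :
    ∀ rest : List Z, (∀ w ∈ rest, mem (Alg l₀) w) → Alg (l₀ ++ rest) = Alg l₀ := by
  intro rest
  induction rest using List.reverseRecOn with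
  | nil => simp
  | append_singleton rest w ih =>
    intro h
    have ih' := ih (fun w hw => h w (by simp [hw]))
    rw [← List.append_assoc]
    rw [hstab (l₀ ++ rest) w (by rw [ih']; exact h w (by simp))]
    exact ih'

/-- Lemma 2: if `I` is a compression set for `z` and the tuple `(j 1, ..., j m)`
covers `I` via `I'`, then `I'` is a compression set for the subtuple
`(z (j 1), ..., z (j m))`. -/
theorem stmt6 {X Z : Type*}
    (mem : X → Z → Prop) (Alg : List Z → X)
    (hcons : Consistent mem Alg) (hperm : PermInvariant Alg) (hstab : Stable mem Alg)
    (d : ℕ) (hd : CompressionSizeLE Alg d)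
    (N m : ℕ) (hN : d ≤ N) (hm : d ≤ m)
    (I : Finset (Fin N)) (hI : I.card = d)
    (j : Fin m → Fin N) (I' : Finset (Fin m)) (hI' : I'.card = d)
    (hIm : I'.image j = I)
    (z : Fin N → Z) (hz : IsCompression Alg z I) :
    IsCompression Alg (fun k => z (j k)) I' := by
  set z' : Fin m → Z := fun k => z (j k) with hz'
  have hinj : Set.InjOn j I' := by
    apply Finset.injOn_of_card_image_eq
    rw [hIm, hI, hI']
  -- the sorted index lists
  have hperm1 : ((I'.sort (· ≤ ·)).map j).Perm (I.sort (· ≤ ·)) := by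
    apply List.perm_of_nodup_nodup_toFinset_eq
    · exact (I'.sort_nodup _).map_on (fun a ha b hb => hinj (by simpa using ha) (by simpa using hb))
    · exact I.sort_nodup _
    · ext a
      simp only [List.mem_toFinset, List.mem_map, Finset.mem_sort, ← hIm,
        Finset.mem_image, Finset.mem_sort]
  have hsub : Alg (subtuple z' I') = Alg (subtuple z I) := by
    apply hperm
    unfold subtuple
    have : (I'.sort (· ≤ ·)).map z' = ((I'.sort (· ≤ ·)).map j).map z := by
      rw [List.map_map]; rfl
    rw [this]
    exact hperm1.map z
  have hsubz : Alg (subtuple z' I') = Alg (List.ofFn z) := by rw [hsub]; exact hz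
  have hfull : (List.ofFn z').Perm (subtuple z' I' ++ subtuple z' I'ᶜ) := by
    unfold subtuple
    rw [← List.map_append]
    have h1 : List.ofFn z' = (List.finRange m).map z' := by
      simp [List.ofFn_eq_map]
    rw [h1]
    apply List.Perm.map
    apply List.perm_of_nodup_nodup_toFinset_eq
    · exact List.nodup_finRange m
    · rw [List.nodup_append]
      refine ⟨I'.sort_nodup _, I'ᶜ.sort_nodup _, ?_⟩
      intro a ha b hb
      simp only [Finset.mem_sort] at ha hb
      have := Finset.mem_compl.mp hb
      rintro rfl
      exact this ha
    · ext a
      simp [Finset.mem_compl]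
  have hmemall : ∀ w ∈ subtuple z' I'ᶜ, mem (Alg (subtuple z' I')) w := by
    intro w hw
    rw [hsubz]
    unfold subtuple at hw
    simp only [List.mem_map] at hw
    obtain ⟨k, _, rfl⟩ := hw
    exact hcons (List.ofFn z) (z (j k)) (by simp [List.mem_ofFn])
  show Alg (subtuple z' I') = Alg (List.ofFn z')
  rw [hperm _ _ hfull, append_eq_of_mem hstab _ _ hmemall]
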